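/- Let F_q be a finite field of odd order and n ≥ 2 even, a_1,...,a_n ∈ F_q^*, b_1,...,b_n ∈ F_q not all zero, a_0, b_0 ∈ F_q. Set a = a_1···a_n, b = Σ b_i^2 a_i^{-1}, c = b_0^2 - a_0 b. If b = 0 and c = 0, then the number of common solutions in F_q^n of a_1 x_1^2 + ... + a_n x_n^2 = a_0 and b_1 x_1 + ... + b_n x_n = b_0 equals q^{n-2} + v(a_0) q^{(n-2)/2} χ((-1)^{n/2} a), where v(a_0) = q-1 if a_0 = 0 and v(a_0) = -1 otherwise, and χ is the quadratic character of F_q. -/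

import Mathlib

open scoped Classical in
/-- The quadratic character of a finite field. -/
noncomputable def quadChar (F : Type*) [Field F] (x : F) : ℤ :=
  if x = 0 then 0 else if IsSquare x then 1 else -1

open Finset AddChar

set_option linter.unusedSectionVars false

section Helpers

variable {F : Type*} [Field F] [Fintype F] [DecidableEq F]
variable {E : Type*} [Field E]

lemma my_addChar_map_sum {ι : Type*} (ψ : AddChar F E) (s : Finset ι) (f : ι → F) :
    ψ (∑ i ∈ s, f i) = ∏ i ∈ s, ψ (f i) := by
  induction s using Finset.cons_induction with
  | empty => simp
  | cons i s hi ih => rw [Finset.sum_cons, Finset.prod_cons, AddChar.map_add_eq_mul, ih]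

lemma my_sum_comp_sq (f : F → E) :
    ∑ y : F, f (y ^ 2) = ∑ u : F, ((univ.filter fun y : F => y ^ 2 = u).card : E) * f u := by
  rw [← Finset.sum_fiberwise_of_maps_to (fun y _ => Finset.mem_univ (y ^ 2)) (fun y => f (y ^ 2))]
  refine Finset.sum_congr rfl fun u _ => ?_
  rw [Finset.sum_congr rfl (fun y hy => by rw [(Finset.mem_filter.mp hy).2]),
    Finset.sum_const, nsmul_eq_mul]

lemma my_sum_sq_eq (hF : ringChar F ≠ 2) (f : F → E) :
    ∑ y : F, f (y ^ 2)
      = ∑ u : F, (1 + ((quadraticChar F u : ℤ) : E)) * f u := by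
  rw [my_sum_comp_sq]
  refine Finset.sum_congr rfl fun u _ => ?_
  congr 1
  have h2 : ({x : F | x ^ 2 = u}.toFinset.card : ℤ) = quadraticChar F u + 1 :=
    quadraticChar_card_sqrts hF u
  have h3 : {x : F | x ^ 2 = u}.toFinset = univ.filter fun y : F => y ^ 2 = u := by
    ext y; simp
  rw [h3] at h2
  have := congrArg (fun z : ℤ => (z : E)) h2
  push_cast at this ⊢
  rw [this]; ring

/-- quadratic char composed into E squares to 1 on nonzero elements -/
lemma my_chi_sq_one (c : F) (hc : c ≠ 0) :
    ((quadraticChar F).ringHomComp (Int.castRingHom E)) c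
      * ((quadraticChar F).ringHomComp (Int.castRingHom E)) c = 1 := by
  have := quadraticChar_sq_one hc
  simp only [MulChar.ringHomComp_apply, eq_intCast]
  rw [← Int.cast_mul, ← pow_two, this, Int.cast_one]

lemma my_sum_quad (hF : ringChar F ≠ 2) (ψ : AddChar F E) (hψ : ψ.IsPrimitive)
    {c : F} (hc : c ≠ 0) :
    letI χ := (quadraticChar F).ringHomComp (Int.castRingHom E)
    ∑ y : F, ψ (c * y ^ 2) = χ c * gaussSum χ ψ := by
  set χ := (quadraticChar F).ringHomComp (Int.castRingHom E) with hχ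
  have key := my_sum_sq_eq hF (fun u => ψ (c * u))
  rw [key]
  have split : ∑ u : F, (1 + ((quadraticChar F u : ℤ) : E)) * ψ (c * u)
      = (∑ u : F, ψ (c * u)) + ∑ u : F, χ u * ψ (c * u) := by
    rw [← Finset.sum_add_distrib]
    refine Finset.sum_congr rfl fun u _ => ?_
    simp only [hχ, MulChar.ringHomComp_apply, eq_intCast]
    ring
  rw [split]
  have h1 : ∑ u : F, ψ (c * u) = 0 := by
    have := AddChar.sum_mulShift (R := F) (R' := E) c hψ
    rw [if_neg hc] at this
    push_cast at this
    rw [← this]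
    exact Finset.sum_congr rfl fun u _ => by rw [mul_comm]
  have h2 : ∑ u : F, χ u * ψ (c * u) = gaussSum χ (ψ.mulShift c) := by
    simp [gaussSum]
  have h3 := gaussSum_mulShift χ ψ (Units.mk0 c hc)
  have h3' : χ c * gaussSum χ (ψ.mulShift c) = gaussSum χ ψ := by simpa using h3
  rw [h1, zero_add, h2, ← h3', ← mul_assoc, my_chi_sq_one c hc, one_mul]

lemma my_sum_quad_lin (hF : ringChar F ≠ 2) (ψ : AddChar F E) (hψ : ψ.IsPrimitive)
    {c : F} (hc : c ≠ 0) (d : F) :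
    letI χ := (quadraticChar F).ringHomComp (Int.castRingHom E)
    ∑ y : F, ψ (c * y ^ 2 + d * y)
      = ψ (-(d ^ 2 / (4 * c))) * (χ c * gaussSum χ ψ) := by
  set χ := (quadraticChar F).ringHomComp (Int.castRingHom E) with hχ
  have h2 : (2 : F) ≠ 0 := Ring.two_ne_zero hF
  have h4 : (4 : F) ≠ 0 := by
    have : (4 : F) = 2 * 2 := by norm_num
    rw [this]; exact mul_ne_zero h2 h2
  have key : ∀ y : F, c * (y - d / (2 * c)) ^ 2 + d * (y - d / (2 * c))
      = c * y ^ 2 + -(d ^ 2 / (4 * c)) := by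
    intro y
    field_simp
    ring
  calc ∑ y : F, ψ (c * y ^ 2 + d * y)
      = ∑ y : F, ψ (c * (y - d / (2 * c)) ^ 2 + d * (y - d / (2 * c))) := by
        refine (Fintype.sum_equiv (Equiv.subRight (d / (2 * c))) _ _ fun y => ?_).symm
        simp [Equiv.subRight]
    _ = ∑ y : F, ψ (c * y ^ 2) * ψ (-(d ^ 2 / (4 * c))) := by
        refine Finset.sum_congr rfl fun y _ => ?_
        rw [key y, AddChar.map_add_eq_mul]
    _ = ψ (-(d ^ 2 / (4 * c))) * (χ c * gaussSum χ ψ) := by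
        rw [← Finset.sum_mul, my_sum_quad hF ψ hψ hc, mul_comm]

lemma my_S_factor (ψ : AddChar F E) (n : ℕ) (a b : Fin n → F) (s t : F) :
    ∑ x : Fin n → F, ψ (s * (∑ i, a i * x i ^ 2) + t * (∑ i, b i * x i))
      = ∏ i, ∑ y : F, ψ (s * a i * y ^ 2 + t * b i * y) := by
  have harg : ∀ x : Fin n → F,
      s * (∑ i, a i * x i ^ 2) + t * (∑ i, b i * x i)
        = ∑ i, (s * a i * x i ^ 2 + t * b i * x i) := by
    intro x
    rw [Finset.mul_sum, Finset.mul_sum, ← Finset.sum_add_distrib]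
    exact Finset.sum_congr rfl fun i _ => by ring
  calc ∑ x : Fin n → F, ψ (s * (∑ i, a i * x i ^ 2) + t * (∑ i, b i * x i))
      = ∑ x : Fin n → F, ∏ i, ψ (s * a i * x i ^ 2 + t * b i * x i) := by
        refine Finset.sum_congr rfl fun x _ => ?_
        rw [harg x, my_addChar_map_sum]
    _ = ∏ i, ∑ y : F, ψ (s * a i * y ^ 2 + t * b i * y) :=
        (Fintype.prod_sum fun i y => ψ (s * a i * y ^ 2 + t * b i * y)).symm

lemma my_S_s_ne (hF : ringChar F ≠ 2) (ψ : AddChar F E) (hψ : ψ.IsPrimitive)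
    (n : ℕ) (hne : Even n) (a b : Fin n → F) (ha : ∀ i, a i ≠ 0)
    (hB : (∑ i, (b i) ^ 2 * (a i)⁻¹) = 0) {s : F} (hs : s ≠ 0) (t : F) :
    letI χ := (quadraticChar F).ringHomComp (Int.castRingHom E)
    ∏ i, ∑ y : F, ψ (s * a i * y ^ 2 + t * b i * y)
      = χ (∏ i, a i) * gaussSum χ ψ ^ n := by
  set χ := (quadraticChar F).ringHomComp (Int.castRingHom E) with hχdef
  have h2 : (2 : F) ≠ 0 := Ring.two_ne_zero hF
  have h4 : (4 : F) ≠ 0 := by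
    have : (4 : F) = 2 * 2 := by norm_num
    rw [this]; exact mul_ne_zero h2 h2
  have step : ∀ i, ∑ y : F, ψ (s * a i * y ^ 2 + t * b i * y)
      = ψ (-((t * b i) ^ 2 / (4 * (s * a i)))) * (χ (s * a i) * gaussSum χ ψ) := by
    intro i
    exact my_sum_quad_lin hF ψ hψ (mul_ne_zero hs (ha i)) (t * b i)
  rw [Finset.prod_congr rfl fun i _ => step i, Finset.prod_mul_distrib,
    Finset.prod_mul_distrib, Finset.prod_const]
  have hpsi : ∏ i, ψ (-((t * b i) ^ 2 / (4 * (s * a i)))) = 1 := by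
    rw [← my_addChar_map_sum]
    have : ∑ i, -((t * b i) ^ 2 / (4 * (s * a i)))
        = (-(t ^ 2) / (4 * s)) * ∑ i, b i ^ 2 * (a i)⁻¹ := by
      rw [Finset.mul_sum]
      refine Finset.sum_congr rfl fun i _ => ?_
      field_simp
    rw [this, hB, mul_zero, AddChar.map_zero_eq_one]
  have hchi : ∏ i, χ (s * a i) = χ (∏ i, a i) := by
    have : ∀ i ∈ Finset.univ, χ (s * a i) = χ s * χ (a i) := fun i _ => map_mul χ s (a i)
    rw [Finset.prod_congr rfl this, Finset.prod_mul_distrib, Finset.prod_const,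
      ← map_prod]
    have hcard : Finset.univ.card = n := Finset.card_fin n
    rw [hcard]
    obtain ⟨m, hm⟩ := hne
    have hn2 : n = 2 * m := by omega
    have hpow : χ s ^ n = 1 := by
      rw [hn2, pow_mul, pow_two, my_chi_sq_one s hs, one_pow]
    rw [hpow, one_mul]
  rw [hpsi, hchi, one_mul, Finset.card_univ, Fintype.card_fin]

lemma my_S_zero_ne (ψ : AddChar F E) (hψ : ψ.IsPrimitive)
    (n : ℕ) (a b : Fin n → F) {i0 : Fin n} (hbi0 : b i0 ≠ 0) {t : F} (ht : t ≠ 0) :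
    ∏ i, ∑ y : F, ψ ((0 : F) * a i * y ^ 2 + t * b i * y) = 0 := by
  refine Finset.prod_eq_zero (Finset.mem_univ i0) ?_
  have : ∀ y : F, (0 : F) * a i0 * y ^ 2 + t * b i0 * y = y * (t * b i0) := by
    intro y; ring
  rw [Finset.sum_congr rfl fun y _ => by rw [this y]]
  rw [AddChar.sum_mulShift _ hψ, if_neg (mul_ne_zero ht hbi0)]
  exact Nat.cast_zero

lemma my_S_zero_zero (ψ : AddChar F E) (n : ℕ) (a b : Fin n → F) :
    ∏ i, ∑ y : F, ψ ((0 : F) * a i * y ^ 2 + (0 : F) * b i * y)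
      = (Fintype.card F : E) ^ n := by
  have : ∀ i : Fin n, ∑ y : F, ψ ((0 : F) * a i * y ^ 2 + (0 : F) * b i * y)
      = (Fintype.card F : E) := by
    intro i
    simp [AddChar.map_zero_eq_one, Finset.card_univ]
  rw [Finset.prod_congr rfl fun i _ => this i, Finset.prod_const, Finset.card_univ,
    Fintype.card_fin]

lemma my_count (ψ : AddChar F E) (hψ : ψ.IsPrimitive)
    (n : ℕ) (a b : Fin n → F) (a0 b0 : F) :
    (Fintype.card F : E) ^ 2
        * (Nat.card {x : Fin n → F //
            (∑ i, a i * (x i) ^ 2) = a0 ∧ (∑ i, b i * x i) = b0} : E)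
      = ∑ s : F, ∑ t : F, ψ (s * -a0) * ψ (t * -b0)
          * ∏ i, ∑ y : F, ψ (s * a i * y ^ 2 + t * b i * y) := by
  classical
  symm
  set q : ℕ := Fintype.card F with hq
  calc ∑ s : F, ∑ t : F, ψ (s * -a0) * ψ (t * -b0)
          * ∏ i, ∑ y : F, ψ (s * a i * y ^ 2 + t * b i * y)
      = ∑ s : F, ∑ t : F, ∑ x : Fin n → F,
          ψ (s * ((∑ i, a i * x i ^ 2) - a0)) * ψ (t * ((∑ i, b i * x i) - b0)) := by
        refine Finset.sum_congr rfl fun s _ => Finset.sum_congr rfl fun t _ => ?_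
        rw [← my_S_factor ψ n a b s t, Finset.mul_sum]
        refine Finset.sum_congr rfl fun x _ => ?_
        have e1 : s * ((∑ i, a i * x i ^ 2) - a0)
            = s * (∑ i, a i * x i ^ 2) + s * -a0 := by ring
        have e2 : t * ((∑ i, b i * x i) - b0)
            = t * (∑ i, b i * x i) + t * -b0 := by ring
        rw [e1, e2, AddChar.map_add_eq_mul, AddChar.map_add_eq_mul,
          AddChar.map_add_eq_mul]
        ring
    _ = ∑ s : F, ∑ x : Fin n → F, ∑ t : F,
          ψ (s * ((∑ i, a i * x i ^ 2) - a0)) * ψ (t * ((∑ i, b i * x i) - b0)) :=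
        Finset.sum_congr rfl fun s _ => Finset.sum_comm
    _ = ∑ x : Fin n → F, ∑ s : F, ∑ t : F,
          ψ (s * ((∑ i, a i * x i ^ 2) - a0)) * ψ (t * ((∑ i, b i * x i) - b0)) :=
        Finset.sum_comm
    _ = ∑ x : Fin n → F, (∑ s : F, ψ (s * ((∑ i, a i * x i ^ 2) - a0)))
          * ∑ t : F, ψ (t * ((∑ i, b i * x i) - b0)) := by
        refine Finset.sum_congr rfl fun x _ => ?_
        rw [Finset.sum_mul_sum]
    _ = ∑ x : Fin n → F,
          (if (∑ i, a i * x i ^ 2) = a0 ∧ (∑ i, b i * x i) = b0 then ((q : E)) ^ 2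
            else 0) := by
        refine Finset.sum_congr rfl fun x _ => ?_
        rw [AddChar.sum_mulShift _ hψ, AddChar.sum_mulShift _ hψ]
        simp only [sub_eq_zero]
        by_cases h1 : (∑ i, a i * x i ^ 2) = a0 <;>
          by_cases h2 : (∑ i, b i * x i) = b0 <;>
          simp [h1, h2, pow_two, hq]
    _ = (q : E) ^ 2 * (Nat.card {x : Fin n → F //
            (∑ i, a i * (x i) ^ 2) = a0 ∧ (∑ i, b i * x i) = b0} : E) := by
        rw [← Finset.sum_filter, Finset.sum_const, nsmul_eq_mul, mul_comm,
          Nat.card_eq_fintype_card, Fintype.card_subtype]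

end Helpers

lemma my_quadChar_eq {F : Type*} [Field F] [Fintype F] [DecidableEq F] (z : F) :
    quadChar F z = quadraticChar F z := by
  simp only [quadChar, quadraticChar_apply, quadraticCharFun]
  split_ifs <;> rfl

open scoped Classical in
theorem stmt_11 (F : Type*) [Field F] [Fintype F] (hq : Odd (Fintype.card F))
    (n : ℕ) (hn : 2 ≤ n) (hne : Even n)
    (a b : Fin n → F) (ha : ∀ i, a i ≠ 0) (hb : ∃ i, b i ≠ 0) (a0 b0 : F)
    (hB : (∑ i, (b i) ^ 2 * (a i)⁻¹) = 0)
    (hc : b0 ^ 2 - a0 * (∑ i, (b i) ^ 2 * (a i)⁻¹) = 0) :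
    (Nat.card {x : Fin n → F //
        (∑ i, a i * (x i) ^ 2) = a0 ∧ (∑ i, b i * x i) = b0} : ℤ)
      = (Fintype.card F : ℤ) ^ (n - 2)
        + (if a0 = 0 then (Fintype.card F : ℤ) - 1 else -1)
          * (Fintype.card F : ℤ) ^ ((n - 2) / 2)
          * quadChar F ((-1 : F) ^ (n / 2) * (∏ i, a i)) := by
  classical
  obtain ⟨m, hm⟩ := hne
  have hq2 : ringChar F ≠ 2 := by
    intro h
    have h1 := FiniteField.even_card_of_char_two h
    have h2 := Nat.odd_iff.mp hq
    omega
  have hb0 : b0 = 0 := by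
    rw [hB, mul_zero, sub_zero, pow_eq_zero_iff (two_ne_zero)] at hc
    exact hc
  subst hb0
  obtain ⟨i0, hbi0⟩ := hb
  have hpne : ringChar ℂ ≠ ringChar F := by
    have h0 : ringChar ℂ = 0 := ringChar.eq_zero
    have h1 : ringChar F ≠ 0 := CharP.char_ne_zero_of_finite F (ringChar F)
    rw [h0]
    exact fun h => h1 h.symm
  set ψp := FiniteField.primitiveChar F ℂ hpne with hψp
  set E := CyclotomicField ψp.n ℂ with hEdef
  set ψ : AddChar F E := ψp.char with hψdef
  have hψ : ψ.IsPrimitive := ψp.prim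
  haveI : CharZero E := charZero_of_injective_algebraMap (algebraMap ℂ E).injective
  set χ : MulChar F E := (quadraticChar F).ringHomComp (Int.castRingHom E) with hχdef
  have hχquad : χ.IsQuadratic := (quadraticChar_isQuadratic F).comp _
  have hχ1 : χ ≠ 1 :=
    (MulChar.ringHomComp_ne_one_iff ((Int.castRingHom E).injective_int)).mpr
      (quadraticChar_ne_one hq2)
  set q : ℕ := Fintype.card F with hqdef
  have hq0 : (q : E) ≠ 0 := Nat.cast_ne_zero.mpr Fintype.card_ne_zero
  set G : E := gaussSum χ ψ with hGdef
  set X : E := χ ((-1 : F) ^ (n / 2) * ∏ i, a i) with hXdef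
  -- the main character sum identity
  have main : (q : E) ^ 2 * (Nat.card {x : Fin n → F //
        (∑ i, a i * (x i) ^ 2) = a0 ∧ (∑ i, b i * x i) = (0 : F)} : E)
      = ((if (-a0) = 0 then (q : E) else 0) - 1)
          * ((q : E) * (χ (∏ i, a i) * G ^ n)) + (q : E) ^ n := by
    rw [my_count ψ hψ n a b a0 0]
    have hstep1 : ∑ s : F, ∑ t : F, ψ (s * -a0) * ψ (t * -(0 : F))
          * ∏ i, ∑ y : F, ψ (s * a i * y ^ 2 + t * b i * y)
        = ∑ s : F, ψ (s * -a0)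
            * ∑ t : F, ∏ i, ∑ y : F, ψ (s * a i * y ^ 2 + t * b i * y) := by
      refine Finset.sum_congr rfl fun s _ => ?_
      rw [Finset.mul_sum]
      exact Finset.sum_congr rfl fun t _ => by
        rw [neg_zero, mul_zero, AddChar.map_zero_eq_one, mul_one]
    rw [hstep1, Finset.sum_eq_sum_sdiff_singleton_add (Finset.mem_univ (0 : F))]
    have hzero : ψ ((0 : F) * -a0)
          * ∑ t : F, ∏ i, ∑ y : F, ψ ((0 : F) * a i * y ^ 2 + t * b i * y)
        = (q : E) ^ n := by
      rw [zero_mul, AddChar.map_zero_eq_one, one_mul,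
        Finset.sum_eq_sum_sdiff_singleton_add (Finset.mem_univ (0 : F))]
      rw [Finset.sum_eq_zero fun t ht => my_S_zero_ne ψ hψ n a b hbi0
          (by simpa using (Finset.mem_sdiff.mp ht).2), zero_add,
        my_S_zero_zero ψ n a b]
    rw [hzero]
    congr 1
    have hnz : ∀ s ∈ Finset.univ \ {(0 : F)},
        ψ (s * -a0) * ∑ t : F, ∏ i, ∑ y : F, ψ (s * a i * y ^ 2 + t * b i * y)
          = ψ (s * -a0) * ((q : E) * (χ (∏ i, a i) * G ^ n)) := by
      intro s hs
      have hs0 : s ≠ 0 := by simpa using (Finset.mem_sdiff.mp hs).2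
      congr 1
      rw [Finset.sum_congr rfl fun t _ =>
          my_S_s_ne hq2 ψ hψ n ⟨m, hm⟩ a b ha hB hs0 t,
        Finset.sum_const, Finset.card_univ, nsmul_eq_mul]
    rw [Finset.sum_congr rfl hnz, ← Finset.sum_mul]
    congr 1
    have htot : ∑ s : F, ψ (s * -a0) = if (-a0) = 0 then (q : E) else 0 := by
      rw [AddChar.sum_mulShift _ hψ]
      split_ifs <;> simp [hqdef]
    have h := Finset.sum_eq_sum_sdiff_singleton_add (Finset.mem_univ (0 : F))
      (fun s => ψ (s * -a0))
    rw [zero_mul, AddChar.map_zero_eq_one, htot] at h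
    exact eq_sub_of_add_eq h.symm
  -- Gauss sum evaluation
  have hG2 : G ^ 2 = χ (-1) * (q : E) := gaussSum_sq hχ1 hχquad hψ
  have hGn : G ^ n = χ ((-1 : F) ^ (n / 2)) * (q : E) ^ (n / 2) := by
    have h1 : G ^ n = (G ^ 2) ^ (n / 2) := by
      conv_lhs => rw [show n = 2 * (n / 2) by omega]
      rw [pow_mul]
    rw [h1, hG2, mul_pow, map_pow]
  have hC : χ (∏ i, a i) * G ^ n = X * (q : E) ^ (n / 2) := by
    rw [hGn, hXdef, map_mul]
    ring
  have key : (Nat.card {x : Fin n → F //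
        (∑ i, a i * (x i) ^ 2) = a0 ∧ (∑ i, b i * x i) = (0 : F)} : E)
      = (q : E) ^ (n - 2)
        + ((if (-a0) = 0 then (q : E) else 0) - 1)
            * ((q : E) ^ ((n - 2) / 2) * X) := by
    apply mul_left_cancel₀ (pow_ne_zero 2 hq0)
    rw [main, hC]
    have e1 : (q : E) ^ n = (q : E) ^ 2 * (q : E) ^ (n - 2) := by
      rw [← pow_add]
      congr 1
      omega
    have e2 : (q : E) ^ (n / 2) = (q : E) ^ ((n - 2) / 2) * (q : E) := by
      rw [← pow_succ]
      congr 1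
      omega
    rw [e1, e2]
    ring
  have hqcE : ((quadChar F ((-1 : F) ^ (n / 2) * (∏ i, a i)) : ℤ) : E) = X := by
    rw [my_quadChar_eq, hXdef, hχdef]
    simp [MulChar.ringHomComp_apply]
  refine Int.cast_injective (α := E) ?_
  simp only [Int.cast_add, Int.cast_mul, Int.cast_pow, Int.cast_natCast, hqcE,
    apply_ite (Int.cast : ℤ → E), Int.cast_sub, Int.cast_one, Int.cast_neg]
  rw [key]
  rw [Int.cast_mul, Int.cast_mul, hqcE]
  push_cast
  by_cases h0 : a0 = 0 <;> simp only [h0, neg_zero, neg_eq_zero, if_true, if_false,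
    ite_true, ite_false, if_pos, if_neg] <;> [skip; push_cast] <;> ring
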